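/- Let u, v, w : ℝ² → ℂ be smooth functions and let U(ζ), V(ζ) be the Lax-pair matrices of the vcmKdV equation built from (u, v, w). Then the zero-curvature equation ∂_t U(ζ) − ∂_x V(ζ) + U(ζ)V(ζ) − V(ζ)U(ζ) = 0 holds for every ζ ∈ ℂ if and only if q = (u, v, w)ᵀ satisfies the vcmKdV equation q_t + q_xxx + 3(q_x q† q + q q† q_x) = 0. -/

import Mathlib

open Matrix Filter Topology

noncomputable section

/-- Partial derivative in the first (space) variable. -/
def dX (f : ℝ × ℝ → ℂ) : ℝ × ℝ → ℂ := fun p => deriv (fun x => f (x, p.2)) p.1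

/-- Partial derivative in the second (time) variable. -/
def dT (f : ℝ × ℝ → ℂ) : ℝ × ℝ → ℂ := fun p => deriv (fun t => f (p.1, t)) p.2

/-- Left-hand side of one component of the vcmKdV equation
`f_t + f_xxx + 3((q†q) f_x + (q†q_x) f)` for `q = (u,v,w)ᵀ`. -/
def vcmLHS (u v w f : ℝ × ℝ → ℂ) (p : ℝ × ℝ) : ℂ :=
  dT f p + dX (dX (dX f)) p
    + 3 * (((starRingEnd ℂ) (u p) * u p + (starRingEnd ℂ) (v p) * v p
            + (starRingEnd ℂ) (w p) * w p) * dX f p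
         + ((starRingEnd ℂ) (u p) * dX u p + (starRingEnd ℂ) (v p) * dX v p
            + (starRingEnd ℂ) (w p) * dX w p) * f p)

/-- The vector complex modified KdV equation
`q_t + q_xxx + 3(q_x q† q + q q† q_x) = 0` for `q = (u,v,w)ᵀ`. -/
def vcmKdVeq (u v w : ℝ × ℝ → ℂ) : Prop :=
  ∀ p : ℝ × ℝ, vcmLHS u v w u p = 0 ∧ vcmLHS u v w v p = 0 ∧ vcmLHS u v w w p = 0

/-- `J = diag(1, -1, -1, -1)`. -/
def Jmat : Matrix (Fin 4) (Fin 4) ℂ := Matrix.diagonal ![1, -1, -1, -1]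

/-- The potential matrix `Q` built from the entries `u, v, w`. -/
def Qmat (u v w : ℂ) : Matrix (Fin 4) (Fin 4) ℂ :=
  !![0, u, v, w;
     -((starRingEnd ℂ) u), 0, 0, 0;
     -((starRingEnd ℂ) v), 0, 0, 0;
     -((starRingEnd ℂ) w), 0, 0, 0]

/-- `U(ζ) = -iζJ + Q`. -/
def Umat (ζ u v w : ℂ) : Matrix (Fin 4) (Fin 4) ℂ :=
  (-Complex.I * ζ) • Jmat + Qmat u v w

/-- `V(ζ) = -4iζ³J + 4ζ²Q - 2iζ(Q² + Q_x)J + (-Q_xx + 2Q³ + Q_x Q - Q Q_x)`. -/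
def Vmat (ζ u v w ux vx wx uxx vxx wxx : ℂ) : Matrix (Fin 4) (Fin 4) ℂ :=
  (-4 * Complex.I * ζ ^ 3) • Jmat + (4 * ζ ^ 2) • Qmat u v w
    - (2 * Complex.I * ζ) • ((Qmat u v w ^ 2 + Qmat ux vx wx) * Jmat)
    + (-Qmat uxx vxx wxx + 2 * Qmat u v w ^ 3
        + Qmat ux vx wx * Qmat u v w - Qmat u v w * Qmat ux vx wx)

/-- `U(ζ)` as a matrix-valued field on `ℝ²`. -/
def Ufield (u v w : ℝ × ℝ → ℂ) (ζ : ℂ) (p : ℝ × ℝ) : Matrix (Fin 4) (Fin 4) ℂ :=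
  Umat ζ (u p) (v p) (w p)

/-- `V(ζ)` as a matrix-valued field on `ℝ²` (with `Q_x`, `Q_xx` the entrywise derivatives). -/
def Vfield (u v w : ℝ × ℝ → ℂ) (ζ : ℂ) (p : ℝ × ℝ) : Matrix (Fin 4) (Fin 4) ℂ :=
  Vmat ζ (u p) (v p) (w p) (dX u p) (dX v p) (dX w p)
    (dX (dX u) p) (dX (dX v) p) (dX (dX w) p)

/-- Entrywise `x`-derivative of a matrix-valued field. -/
def dXM (F : ℝ × ℝ → Matrix (Fin 4) (Fin 4) ℂ) (p : ℝ × ℝ) : Matrix (Fin 4) (Fin 4) ℂ :=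
  Matrix.of fun i j => deriv (fun x => F (x, p.2) i j) p.1

/-- Entrywise `t`-derivative of a matrix-valued field. -/
def dTM (F : ℝ × ℝ → Matrix (Fin 4) (Fin 4) ℂ) (p : ℝ × ℝ) : Matrix (Fin 4) (Fin 4) ℂ :=
  Matrix.of fun i j => deriv (fun t => F (p.1, t) i j) p.2

/-- `Ψ` solves the Lax pair `Ψ_x = U(ζ)Ψ`, `Ψ_t = V(ζ)Ψ` with potentials `(u,v,w)`. -/
def SolvesLax (u v w : ℝ × ℝ → ℂ) (ζ : ℂ) (Ψ : ℝ × ℝ → Fin 4 → ℂ) : Prop :=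
  ∀ p : ℝ × ℝ,
    HasDerivAt (fun x => Ψ (x, p.2)) ((Ufield u v w ζ p).mulVec (Ψ p)) p.1 ∧
    HasDerivAt (fun t => Ψ (p.1, t)) ((Vfield u v w ζ p).mulVec (Ψ p)) p.2

/-- The rank-one projection `ψψ†/(ψ†ψ)`. -/
def projOf (ψ : Fin 4 → ℂ) : Matrix (Fin 4) (Fin 4) ℂ :=
  (star ψ ⬝ᵥ ψ)⁻¹ • vecMulVec ψ (star ψ)

/-- One-fold Darboux matrix `T(ζ) = I - ((ζ₁ - ζ₁*)/(ζ - ζ₁*)) ψψ†/(ψ†ψ)`. -/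
def Tone (ζ₁ ζ : ℂ) (ψ : Fin 4 → ℂ) : Matrix (Fin 4) (Fin 4) ℂ :=
  1 - ((ζ₁ - (starRingEnd ℂ) ζ₁) / (ζ - (starRingEnd ℂ) ζ₁)) • projOf ψ

/-- Transformed potential `f - 2i(ζ₁ - ζ₁*) Ψ₁⁰ (Ψ₁ʲ)* / (Ψ₁†Ψ₁)` of the one-fold DT. -/
def u1of (f : ℝ × ℝ → ℂ) (ζ₁ : ℂ) (Ψ₁ : ℝ × ℝ → Fin 4 → ℂ) (j : Fin 4) : ℝ × ℝ → ℂ :=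
  fun p => f p - 2 * Complex.I * (ζ₁ - (starRingEnd ℂ) ζ₁) * Ψ₁ p 0
      * (starRingEnd ℂ) (Ψ₁ p j) / (star (Ψ₁ p) ⬝ᵥ Ψ₁ p)

/-- The iterated eigenfunctions `Ψ_i^{(k)}` of the `N`-fold Darboux recursion
(0-based indexing: `PsiIter ζs Ψs k i = Ψ_{i+1}^{(k)}`). -/
def PsiIter (ζs : ℕ → ℂ) (Ψs : ℕ → ℝ × ℝ → Fin 4 → ℂ) : ℕ → ℕ → ℝ × ℝ → Fin 4 → ℂ
  | 0, i => Ψs i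
  | k + 1, i => fun p =>
      (Tone (ζs k) (ζs i) (PsiIter ζs Ψs k k p)).mulVec (PsiIter ζs Ψs k i p)

/-- The product `T_N(ζ) = T[N](ζ) ⋯ T[1](ζ)` of the `N`-fold Darboux recursion. -/
def TNmat (ζs : ℕ → ℂ) (Ψs : ℕ → ℝ × ℝ → Fin 4 → ℂ) :
    ℕ → ℂ → ℝ × ℝ → Matrix (Fin 4) (Fin 4) ℂ
  | 0, _, _ => 1
  | k + 1, ζ, p => Tone (ζs k) ζ (PsiIter ζs Ψs k k p) * TNmat ζs Ψs k ζ p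

/-- The explicit eigenfunction of the Lax pair for the zero seed at eigenvalue `ζk`. -/
def seedPsi (ζk : ℂ) (c₁ c₂ c₃ : ℝ) (p : ℝ × ℝ) : Fin 4 → ℂ :=
  ![Complex.exp (-Complex.I * ζk * (4 * p.2 * ζk ^ 2 + p.1)),
    c₁ * Complex.exp (Complex.I * ζk * (4 * p.2 * ζk ^ 2 + p.1)),
    c₂ * Complex.exp (Complex.I * ζk * (4 * p.2 * ζk ^ 2 + p.1)),
    c₃ * Complex.exp (Complex.I * ζk * (4 * p.2 * ζk ^ 2 + p.1))]

/-- The `N×N` matrix `M` with entries `M_{jk} = Ψ_j†Ψ_k/(ζ_k - ζ_j*)`. -/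
def MmatOf {N : ℕ} (ζs : Fin N → ℂ) (Ψs : Fin N → ℝ × ℝ → Fin 4 → ℂ) (p : ℝ × ℝ) :
    Matrix (Fin N) (Fin N) ℂ :=
  Matrix.of fun j k => (star (Ψs j p) ⬝ᵥ Ψs k p) / (ζs k - (starRingEnd ℂ) (ζs j))

/-- The `4×N` matrix `X = (Ψ₁, …, Ψ_N)` whose columns are the eigenfunctions. -/
def XmatOf {N : ℕ} (Ψs : Fin N → ℝ × ℝ → Fin 4 → ℂ) (p : ℝ × ℝ) :
    Matrix (Fin 4) (Fin N) ℂ :=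
  Matrix.of fun a j => Ψs j p a

/-- `M` bordered on the right by the column `c` and at the bottom by the row `(r, 0)`. -/
def bordered {N : ℕ} (M : Matrix (Fin N) (Fin N) ℂ) (c r : Fin N → ℂ) :
    Matrix (Fin (N + 1)) (Fin (N + 1)) ℂ :=
  Matrix.of fun i j =>
    Fin.lastCases
      (Fin.lastCases (0 : ℂ) (fun j' => r j') j)
      (fun i' => Fin.lastCases (c i') (fun j' => M i' j') j)
      i

/-! ### Auxiliary lemmas for the zero-curvature computation -/

section ZCAux

lemma zc_hasDerivAt_dX {f : ℝ × ℝ → ℂ} (hf : ContDiff ℝ (⊤:ℕ∞) f) (p : ℝ × ℝ) :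
    HasDerivAt (fun x => f (x, p.2)) (dX f p) p.1 := by
  have hs : HasDerivAt (fun x : ℝ => (x, p.2)) ((1:ℝ), (0:ℝ)) p.1 :=
    (hasDerivAt_id p.1).prodMk (hasDerivAt_const _ _)
  have h' : HasDerivAt (fun x => f (x, p.2)) ((fderiv ℝ f (p.1,p.2)) (1,0)) p.1 :=
    ((hf.differentiable (by simp) (p.1, p.2)).hasFDerivAt).comp_hasDerivAt p.1 hs
  have hd : dX f p = (fderiv ℝ f (p.1,p.2)) (1,0) := h'.deriv
  rw [hd]; exact h'

lemma zc_hasDerivAt_dT {f : ℝ × ℝ → ℂ} (hf : ContDiff ℝ (⊤:ℕ∞) f) (p : ℝ × ℝ) :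
    HasDerivAt (fun t => f (p.1, t)) (dT f p) p.2 := by
  have hs : HasDerivAt (fun t : ℝ => (p.1, t)) ((0:ℝ), (1:ℝ)) p.2 :=
    (hasDerivAt_const _ _).prodMk (hasDerivAt_id p.2)
  have h' : HasDerivAt (fun t => f (p.1, t)) ((fderiv ℝ f (p.1,p.2)) (0,1)) p.2 :=
    ((hf.differentiable (by simp) (p.1, p.2)).hasFDerivAt).comp_hasDerivAt p.2 hs
  have hd : dT f p = (fderiv ℝ f (p.1,p.2)) (0,1) := h'.deriv
  rw [hd]; exact h'

lemma zc_contDiff_dX {f : ℝ × ℝ → ℂ} (hf : ContDiff ℝ (⊤:ℕ∞) f) :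
    ContDiff ℝ (⊤:ℕ∞) (dX f) := by
  have heq : dX f = fun p => (fderiv ℝ f p) (1, 0) := by
    funext p
    have hs : HasDerivAt (fun x : ℝ => (x, p.2)) ((1:ℝ), (0:ℝ)) p.1 :=
      (hasDerivAt_id p.1).prodMk (hasDerivAt_const _ _)
    have h' : HasDerivAt (fun x => f (x, p.2)) ((fderiv ℝ f (p.1,p.2)) (1,0)) p.1 :=
      ((hf.differentiable (by simp) (p.1, p.2)).hasFDerivAt).comp_hasDerivAt p.1 hs
    simpa [dX] using h'.deriv
  rw [heq]
  exact (hf.fderiv_right (mod_cast le_top)).clm_apply contDiff_const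

/-- Entrywise `HasDerivAt` for a matrix-valued function of one real variable. -/
def HMz (F : ℝ → Matrix (Fin 4) (Fin 4) ℂ) (F' : Matrix (Fin 4) (Fin 4) ℂ) (x : ℝ) : Prop :=
  ∀ i j, HasDerivAt (fun s => F s i j) (F' i j) x

namespace HMz
variable {F G : ℝ → Matrix (Fin 4) (Fin 4) ℂ} {A B : Matrix (Fin 4) (Fin 4) ℂ} {x : ℝ}

lemma const (A : Matrix (Fin 4) (Fin 4) ℂ) (x : ℝ) : HMz (fun _ => A) 0 x := by
  intro i j; simpa using hasDerivAt_const x (A i j)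

lemma add (hF : HMz F A x) (hG : HMz G B x) : HMz (fun s => F s + G s) (A + B) x := by
  intro i j; simpa [Matrix.add_apply] using (hF i j).fun_add (hG i j)

lemma sub (hF : HMz F A x) (hG : HMz G B x) : HMz (fun s => F s - G s) (A - B) x := by
  intro i j; simpa [Matrix.sub_apply] using (hF i j).fun_sub (hG i j)

lemma neg (hF : HMz F A x) : HMz (fun s => -F s) (-A) x := by
  intro i j; simpa [Matrix.neg_apply] using (hF i j).fun_neg

lemma smul (c : ℂ) (hF : HMz F A x) : HMz (fun s => c • F s) (c • A) x := by
  intro i j; simpa [Matrix.smul_apply, smul_eq_mul] using (hF i j).const_mul c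

lemma mul (hF : HMz F A x) (hG : HMz G B x) :
    HMz (fun s => F s * G s) (A * G x + F x * B) x := by
  intro i j
  have h : HasDerivAt (fun s => ∑ k, F s i k * G s k j)
      (∑ k, (A i k * G x k j + F x i k * B k j)) x :=
    HasDerivAt.fun_sum (fun k _ => (hF i k).fun_mul (hG k j))
  simpa [Matrix.mul_apply, Matrix.add_apply, Finset.sum_add_distrib] using h

lemma sq (hF : HMz F A x) : HMz (fun s => F s ^ 2) (A * F x + F x * A) x := by
  intro i j
  simpa [pow_two] using (hF.mul hF) i j

lemma cube (hF : HMz F A x) :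
    HMz (fun s => F s ^ 3) ((A * F x + F x * A) * F x + F x ^ 2 * A) x := by
  intro i j
  simpa [pow_succ, pow_two] using (hF.sq.mul hF) i j

lemma two_mul' (hF : HMz F A x) : HMz (fun s => 2 * F s) (A + A) x := by
  intro i j
  simpa [two_mul, Matrix.add_apply] using (hF i j).fun_add (hF i j)

end HMz

lemma zc_dTM_eq {F : ℝ × ℝ → Matrix (Fin 4) (Fin 4) ℂ} {F' : Matrix (Fin 4) (Fin 4) ℂ}
    {p : ℝ × ℝ} (h : HMz (fun t => F (p.1, t)) F' p.2) : dTM F p = F' := by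
  ext i j
  exact (h i j).deriv

lemma zc_dXM_eq {F : ℝ × ℝ → Matrix (Fin 4) (Fin 4) ℂ} {F' : Matrix (Fin 4) (Fin 4) ℂ}
    {p : ℝ × ℝ} (h : HMz (fun x => F (x, p.2)) F' p.1) : dXM F p = F' := by
  ext i j
  exact (h i j).deriv

lemma zc_HMQ {a b c : ℝ → ℂ} {a' b' c' : ℂ} {x : ℝ}
    (ha : HasDerivAt a a' x) (hb : HasDerivAt b b' x) (hc : HasDerivAt c c' x) :
    HMz (fun s => Qmat (a s) (b s) (c s)) (Qmat a' b' c') x := by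
  intro i j
  fin_cases i <;> fin_cases j <;>
    simp only [Qmat, Matrix.cons_val', Matrix.cons_val_zero, Matrix.cons_val_one,
      Matrix.head_cons, Matrix.empty_val', Matrix.cons_val_fin_one, Matrix.head_fin_const,
      Matrix.of_apply, Fin.isValue, Matrix.cons_val_two, Matrix.cons_val_three,
      Matrix.tail_cons] <;>
    first
      | exact hasDerivAt_const _ _
      | exact ha | exact hb | exact hc
      | exact (ha.star).neg | exact (hb.star).neg | exact (hc.star).neg

end ZCAux


lemma Jmat_eq : Jmat = !![1,0,0,0; 0,-1,0,0; 0,0,-1,0; 0,0,0,-1] := by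
  ext i j
  fin_cases i <;> fin_cases j <;> rfl

def zcL (ζ a b c a1 b1 c1 a2 b2 c2 a3 b3 c3 ta tb tc : ℂ) : Matrix (Fin 4) (Fin 4) ℂ :=
  (0 : Matrix (Fin 4) (Fin 4) ℂ) + Qmat ta tb tc
      - ((0 : Matrix (Fin 4) (Fin 4) ℂ) + (4 * ζ ^ 2) • Qmat a1 b1 c1
          - (2 * Complex.I * ζ) • ((Qmat a1 b1 c1 * Qmat a b c + Qmat a b c * Qmat a1 b1 c1
                + Qmat a2 b2 c2) * Jmat + (Qmat a b c ^ 2 + Qmat a1 b1 c1) * 0)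
          + (-Qmat a3 b3 c3
                + ((Qmat a1 b1 c1 * Qmat a b c + Qmat a b c * Qmat a1 b1 c1) * Qmat a b c
                      + Qmat a b c ^ 2 * Qmat a1 b1 c1
                   + ((Qmat a1 b1 c1 * Qmat a b c + Qmat a b c * Qmat a1 b1 c1) * Qmat a b c
                      + Qmat a b c ^ 2 * Qmat a1 b1 c1))
                + (Qmat a2 b2 c2 * Qmat a b c + Qmat a1 b1 c1 * Qmat a1 b1 c1)
              - (Qmat a1 b1 c1 * Qmat a1 b1 c1 + Qmat a b c * Qmat a2 b2 c2)))
      + Umat ζ a b c * Vmat ζ a b c a1 b1 c1 a2 b2 c2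
      - Vmat ζ a b c a1 b1 c1 a2 b2 c2 * Umat ζ a b c

def zcR (a b c a1 b1 c1 a3 b3 c3 ta tb tc : ℂ) : Matrix (Fin 4) (Fin 4) ℂ :=
  Qmat
    (ta + a3 + 3 * ((starRingEnd ℂ a * a + starRingEnd ℂ b * b + starRingEnd ℂ c * c) * a1
        + (starRingEnd ℂ a * a1 + starRingEnd ℂ b * b1 + starRingEnd ℂ c * c1) * a))
    (tb + b3 + 3 * ((starRingEnd ℂ a * a + starRingEnd ℂ b * b + starRingEnd ℂ c * c) * b1
        + (starRingEnd ℂ a * a1 + starRingEnd ℂ b * b1 + starRingEnd ℂ c * c1) * b))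
    (tc + c3 + 3 * ((starRingEnd ℂ a * a + starRingEnd ℂ b * b + starRingEnd ℂ c * c) * c1
        + (starRingEnd ℂ a * a1 + starRingEnd ℂ b * b1 + starRingEnd ℂ c * c1) * c))

set_option maxHeartbeats 1000000 in
lemma zc_e00 (ζ a b c a1 b1 c1 a2 b2 c2 a3 b3 c3 ta tb tc : ℂ) :
    zcL ζ a b c a1 b1 c1 a2 b2 c2 a3 b3 c3 ta tb tc 0 0
      = zcR a b c a1 b1 c1 a3 b3 c3 ta tb tc 0 0 := by
  simp only [zcL, zcR, Umat, Vmat, two_mul, pow_two, pow_three, Jmat_eq, Qmat,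
      Matrix.mul_apply, Fin.sum_univ_four, Matrix.add_apply,
      Matrix.sub_apply, Matrix.neg_apply, Matrix.smul_apply, Matrix.zero_apply,
      Matrix.of_apply, Matrix.cons_val', Matrix.cons_val_zero, Matrix.cons_val_one,
      Matrix.head_cons, Matrix.empty_val', Matrix.cons_val_fin_one, Matrix.head_fin_const,
      Matrix.cons_val_two, Matrix.cons_val_three, Matrix.tail_cons, Fin.isValue,
      smul_eq_mul, map_add, _root_.map_mul, map_ofNat, map_neg, map_zero,
      Complex.conj_conj, zero_add, add_zero, mul_zero, zero_mul, neg_zero, mul_one, one_mul,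
      neg_neg, mul_neg, neg_mul]
  try ring_nf
  try simp only [Complex.I_sq]
  try ring_nf

set_option maxHeartbeats 1000000 in
lemma zc_e01 (ζ a b c a1 b1 c1 a2 b2 c2 a3 b3 c3 ta tb tc : ℂ) :
    zcL ζ a b c a1 b1 c1 a2 b2 c2 a3 b3 c3 ta tb tc 0 1
      = zcR a b c a1 b1 c1 a3 b3 c3 ta tb tc 0 1 := by
  simp only [zcL, zcR, Umat, Vmat, two_mul, pow_two, pow_three, Jmat_eq, Qmat,
      Matrix.mul_apply, Fin.sum_univ_four, Matrix.add_apply,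
      Matrix.sub_apply, Matrix.neg_apply, Matrix.smul_apply, Matrix.zero_apply,
      Matrix.of_apply, Matrix.cons_val', Matrix.cons_val_zero, Matrix.cons_val_one,
      Matrix.head_cons, Matrix.empty_val', Matrix.cons_val_fin_one, Matrix.head_fin_const,
      Matrix.cons_val_two, Matrix.cons_val_three, Matrix.tail_cons, Fin.isValue,
      smul_eq_mul, map_add, _root_.map_mul, map_ofNat, map_neg, map_zero,
      Complex.conj_conj, zero_add, add_zero, mul_zero, zero_mul, neg_zero, mul_one, one_mul,
      neg_neg, mul_neg, neg_mul]
  try ring_nf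
  try simp only [Complex.I_sq]
  try ring_nf

set_option maxHeartbeats 1000000 in
lemma zc_e02 (ζ a b c a1 b1 c1 a2 b2 c2 a3 b3 c3 ta tb tc : ℂ) :
    zcL ζ a b c a1 b1 c1 a2 b2 c2 a3 b3 c3 ta tb tc 0 2
      = zcR a b c a1 b1 c1 a3 b3 c3 ta tb tc 0 2 := by
  simp only [zcL, zcR, Umat, Vmat, two_mul, pow_two, pow_three, Jmat_eq, Qmat,
      Matrix.mul_apply, Fin.sum_univ_four, Matrix.add_apply,
      Matrix.sub_apply, Matrix.neg_apply, Matrix.smul_apply, Matrix.zero_apply,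
      Matrix.of_apply, Matrix.cons_val', Matrix.cons_val_zero, Matrix.cons_val_one,
      Matrix.head_cons, Matrix.empty_val', Matrix.cons_val_fin_one, Matrix.head_fin_const,
      Matrix.cons_val_two, Matrix.cons_val_three, Matrix.tail_cons, Fin.isValue,
      smul_eq_mul, map_add, _root_.map_mul, map_ofNat, map_neg, map_zero,
      Complex.conj_conj, zero_add, add_zero, mul_zero, zero_mul, neg_zero, mul_one, one_mul,
      neg_neg, mul_neg, neg_mul]
  try ring_nf
  try simp only [Complex.I_sq]
  try ring_nf

set_option maxHeartbeats 1000000 in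
lemma zc_e03 (ζ a b c a1 b1 c1 a2 b2 c2 a3 b3 c3 ta tb tc : ℂ) :
    zcL ζ a b c a1 b1 c1 a2 b2 c2 a3 b3 c3 ta tb tc 0 3
      = zcR a b c a1 b1 c1 a3 b3 c3 ta tb tc 0 3 := by
  simp only [zcL, zcR, Umat, Vmat, two_mul, pow_two, pow_three, Jmat_eq, Qmat,
      Matrix.mul_apply, Fin.sum_univ_four, Matrix.add_apply,
      Matrix.sub_apply, Matrix.neg_apply, Matrix.smul_apply, Matrix.zero_apply,
      Matrix.of_apply, Matrix.cons_val', Matrix.cons_val_zero, Matrix.cons_val_one,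
      Matrix.head_cons, Matrix.empty_val', Matrix.cons_val_fin_one, Matrix.head_fin_const,
      Matrix.cons_val_two, Matrix.cons_val_three, Matrix.tail_cons, Fin.isValue,
      smul_eq_mul, map_add, _root_.map_mul, map_ofNat, map_neg, map_zero,
      Complex.conj_conj, zero_add, add_zero, mul_zero, zero_mul, neg_zero, mul_one, one_mul,
      neg_neg, mul_neg, neg_mul]
  try ring_nf
  try simp only [Complex.I_sq]
  try ring_nf

set_option maxHeartbeats 1000000 in
lemma zc_e10 (ζ a b c a1 b1 c1 a2 b2 c2 a3 b3 c3 ta tb tc : ℂ) :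
    zcL ζ a b c a1 b1 c1 a2 b2 c2 a3 b3 c3 ta tb tc 1 0
      = zcR a b c a1 b1 c1 a3 b3 c3 ta tb tc 1 0 := by
  simp only [zcL, zcR, Umat, Vmat, two_mul, pow_two, pow_three, Jmat_eq, Qmat,
      Matrix.mul_apply, Fin.sum_univ_four, Matrix.add_apply,
      Matrix.sub_apply, Matrix.neg_apply, Matrix.smul_apply, Matrix.zero_apply,
      Matrix.of_apply, Matrix.cons_val', Matrix.cons_val_zero, Matrix.cons_val_one,
      Matrix.head_cons, Matrix.empty_val', Matrix.cons_val_fin_one, Matrix.head_fin_const,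
      Matrix.cons_val_two, Matrix.cons_val_three, Matrix.tail_cons, Fin.isValue,
      smul_eq_mul, map_add, _root_.map_mul, map_ofNat, map_neg, map_zero,
      Complex.conj_conj, zero_add, add_zero, mul_zero, zero_mul, neg_zero, mul_one, one_mul,
      neg_neg, mul_neg, neg_mul]
  try ring_nf
  try simp only [Complex.I_sq]
  try ring_nf

set_option maxHeartbeats 1000000 in
lemma zc_e11 (ζ a b c a1 b1 c1 a2 b2 c2 a3 b3 c3 ta tb tc : ℂ) :
    zcL ζ a b c a1 b1 c1 a2 b2 c2 a3 b3 c3 ta tb tc 1 1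
      = zcR a b c a1 b1 c1 a3 b3 c3 ta tb tc 1 1 := by
  simp only [zcL, zcR, Umat, Vmat, two_mul, pow_two, pow_three, Jmat_eq, Qmat,
      Matrix.mul_apply, Fin.sum_univ_four, Matrix.add_apply,
      Matrix.sub_apply, Matrix.neg_apply, Matrix.smul_apply, Matrix.zero_apply,
      Matrix.of_apply, Matrix.cons_val', Matrix.cons_val_zero, Matrix.cons_val_one,
      Matrix.head_cons, Matrix.empty_val', Matrix.cons_val_fin_one, Matrix.head_fin_const,
      Matrix.cons_val_two, Matrix.cons_val_three, Matrix.tail_cons, Fin.isValue,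
      smul_eq_mul, map_add, _root_.map_mul, map_ofNat, map_neg, map_zero,
      Complex.conj_conj, zero_add, add_zero, mul_zero, zero_mul, neg_zero, mul_one, one_mul,
      neg_neg, mul_neg, neg_mul]
  try ring_nf
  try simp only [Complex.I_sq]
  try ring_nf

set_option maxHeartbeats 1000000 in
lemma zc_e12 (ζ a b c a1 b1 c1 a2 b2 c2 a3 b3 c3 ta tb tc : ℂ) :
    zcL ζ a b c a1 b1 c1 a2 b2 c2 a3 b3 c3 ta tb tc 1 2
      = zcR a b c a1 b1 c1 a3 b3 c3 ta tb tc 1 2 := by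
  simp only [zcL, zcR, Umat, Vmat, two_mul, pow_two, pow_three, Jmat_eq, Qmat,
      Matrix.mul_apply, Fin.sum_univ_four, Matrix.add_apply,
      Matrix.sub_apply, Matrix.neg_apply, Matrix.smul_apply, Matrix.zero_apply,
      Matrix.of_apply, Matrix.cons_val', Matrix.cons_val_zero, Matrix.cons_val_one,
      Matrix.head_cons, Matrix.empty_val', Matrix.cons_val_fin_one, Matrix.head_fin_const,
      Matrix.cons_val_two, Matrix.cons_val_three, Matrix.tail_cons, Fin.isValue,
      smul_eq_mul, map_add, _root_.map_mul, map_ofNat, map_neg, map_zero,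
      Complex.conj_conj, zero_add, add_zero, mul_zero, zero_mul, neg_zero, mul_one, one_mul,
      neg_neg, mul_neg, neg_mul]
  try ring_nf
  try simp only [Complex.I_sq]
  try ring_nf

set_option maxHeartbeats 1000000 in
lemma zc_e13 (ζ a b c a1 b1 c1 a2 b2 c2 a3 b3 c3 ta tb tc : ℂ) :
    zcL ζ a b c a1 b1 c1 a2 b2 c2 a3 b3 c3 ta tb tc 1 3
      = zcR a b c a1 b1 c1 a3 b3 c3 ta tb tc 1 3 := by
  simp only [zcL, zcR, Umat, Vmat, two_mul, pow_two, pow_three, Jmat_eq, Qmat,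
      Matrix.mul_apply, Fin.sum_univ_four, Matrix.add_apply,
      Matrix.sub_apply, Matrix.neg_apply, Matrix.smul_apply, Matrix.zero_apply,
      Matrix.of_apply, Matrix.cons_val', Matrix.cons_val_zero, Matrix.cons_val_one,
      Matrix.head_cons, Matrix.empty_val', Matrix.cons_val_fin_one, Matrix.head_fin_const,
      Matrix.cons_val_two, Matrix.cons_val_three, Matrix.tail_cons, Fin.isValue,
      smul_eq_mul, map_add, _root_.map_mul, map_ofNat, map_neg, map_zero,
      Complex.conj_conj, zero_add, add_zero, mul_zero, zero_mul, neg_zero, mul_one, one_mul,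
      neg_neg, mul_neg, neg_mul]
  try ring_nf
  try simp only [Complex.I_sq]
  try ring_nf

set_option maxHeartbeats 1000000 in
lemma zc_e20 (ζ a b c a1 b1 c1 a2 b2 c2 a3 b3 c3 ta tb tc : ℂ) :
    zcL ζ a b c a1 b1 c1 a2 b2 c2 a3 b3 c3 ta tb tc 2 0
      = zcR a b c a1 b1 c1 a3 b3 c3 ta tb tc 2 0 := by
  simp only [zcL, zcR, Umat, Vmat, two_mul, pow_two, pow_three, Jmat_eq, Qmat,
      Matrix.mul_apply, Fin.sum_univ_four, Matrix.add_apply,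
      Matrix.sub_apply, Matrix.neg_apply, Matrix.smul_apply, Matrix.zero_apply,
      Matrix.of_apply, Matrix.cons_val', Matrix.cons_val_zero, Matrix.cons_val_one,
      Matrix.head_cons, Matrix.empty_val', Matrix.cons_val_fin_one, Matrix.head_fin_const,
      Matrix.cons_val_two, Matrix.cons_val_three, Matrix.tail_cons, Fin.isValue,
      smul_eq_mul, map_add, _root_.map_mul, map_ofNat, map_neg, map_zero,
      Complex.conj_conj, zero_add, add_zero, mul_zero, zero_mul, neg_zero, mul_one, one_mul,
      neg_neg, mul_neg, neg_mul]
  try ring_nf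
  try simp only [Complex.I_sq]
  try ring_nf

set_option maxHeartbeats 1000000 in
lemma zc_e21 (ζ a b c a1 b1 c1 a2 b2 c2 a3 b3 c3 ta tb tc : ℂ) :
    zcL ζ a b c a1 b1 c1 a2 b2 c2 a3 b3 c3 ta tb tc 2 1
      = zcR a b c a1 b1 c1 a3 b3 c3 ta tb tc 2 1 := by
  simp only [zcL, zcR, Umat, Vmat, two_mul, pow_two, pow_three, Jmat_eq, Qmat,
      Matrix.mul_apply, Fin.sum_univ_four, Matrix.add_apply,
      Matrix.sub_apply, Matrix.neg_apply, Matrix.smul_apply, Matrix.zero_apply,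
      Matrix.of_apply, Matrix.cons_val', Matrix.cons_val_zero, Matrix.cons_val_one,
      Matrix.head_cons, Matrix.empty_val', Matrix.cons_val_fin_one, Matrix.head_fin_const,
      Matrix.cons_val_two, Matrix.cons_val_three, Matrix.tail_cons, Fin.isValue,
      smul_eq_mul, map_add, _root_.map_mul, map_ofNat, map_neg, map_zero,
      Complex.conj_conj, zero_add, add_zero, mul_zero, zero_mul, neg_zero, mul_one, one_mul,
      neg_neg, mul_neg, neg_mul]
  try ring_nf
  try simp only [Complex.I_sq]
  try ring_nf

set_option maxHeartbeats 1000000 in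
lemma zc_e22 (ζ a b c a1 b1 c1 a2 b2 c2 a3 b3 c3 ta tb tc : ℂ) :
    zcL ζ a b c a1 b1 c1 a2 b2 c2 a3 b3 c3 ta tb tc 2 2
      = zcR a b c a1 b1 c1 a3 b3 c3 ta tb tc 2 2 := by
  simp only [zcL, zcR, Umat, Vmat, two_mul, pow_two, pow_three, Jmat_eq, Qmat,
      Matrix.mul_apply, Fin.sum_univ_four, Matrix.add_apply,
      Matrix.sub_apply, Matrix.neg_apply, Matrix.smul_apply, Matrix.zero_apply,
      Matrix.of_apply, Matrix.cons_val', Matrix.cons_val_zero, Matrix.cons_val_one,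
      Matrix.head_cons, Matrix.empty_val', Matrix.cons_val_fin_one, Matrix.head_fin_const,
      Matrix.cons_val_two, Matrix.cons_val_three, Matrix.tail_cons, Fin.isValue,
      smul_eq_mul, map_add, _root_.map_mul, map_ofNat, map_neg, map_zero,
      Complex.conj_conj, zero_add, add_zero, mul_zero, zero_mul, neg_zero, mul_one, one_mul,
      neg_neg, mul_neg, neg_mul]
  try ring_nf
  try simp only [Complex.I_sq]
  try ring_nf

set_option maxHeartbeats 1000000 in
lemma zc_e23 (ζ a b c a1 b1 c1 a2 b2 c2 a3 b3 c3 ta tb tc : ℂ) :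
    zcL ζ a b c a1 b1 c1 a2 b2 c2 a3 b3 c3 ta tb tc 2 3
      = zcR a b c a1 b1 c1 a3 b3 c3 ta tb tc 2 3 := by
  simp only [zcL, zcR, Umat, Vmat, two_mul, pow_two, pow_three, Jmat_eq, Qmat,
      Matrix.mul_apply, Fin.sum_univ_four, Matrix.add_apply,
      Matrix.sub_apply, Matrix.neg_apply, Matrix.smul_apply, Matrix.zero_apply,
      Matrix.of_apply, Matrix.cons_val', Matrix.cons_val_zero, Matrix.cons_val_one,
      Matrix.head_cons, Matrix.empty_val', Matrix.cons_val_fin_one, Matrix.head_fin_const,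
      Matrix.cons_val_two, Matrix.cons_val_three, Matrix.tail_cons, Fin.isValue,
      smul_eq_mul, map_add, _root_.map_mul, map_ofNat, map_neg, map_zero,
      Complex.conj_conj, zero_add, add_zero, mul_zero, zero_mul, neg_zero, mul_one, one_mul,
      neg_neg, mul_neg, neg_mul]
  try ring_nf
  try simp only [Complex.I_sq]
  try ring_nf

set_option maxHeartbeats 1000000 in
lemma zc_e30 (ζ a b c a1 b1 c1 a2 b2 c2 a3 b3 c3 ta tb tc : ℂ) :
    zcL ζ a b c a1 b1 c1 a2 b2 c2 a3 b3 c3 ta tb tc 3 0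
      = zcR a b c a1 b1 c1 a3 b3 c3 ta tb tc 3 0 := by
  simp only [zcL, zcR, Umat, Vmat, two_mul, pow_two, pow_three, Jmat_eq, Qmat,
      Matrix.mul_apply, Fin.sum_univ_four, Matrix.add_apply,
      Matrix.sub_apply, Matrix.neg_apply, Matrix.smul_apply, Matrix.zero_apply,
      Matrix.of_apply, Matrix.cons_val', Matrix.cons_val_zero, Matrix.cons_val_one,
      Matrix.head_cons, Matrix.empty_val', Matrix.cons_val_fin_one, Matrix.head_fin_const,
      Matrix.cons_val_two, Matrix.cons_val_three, Matrix.tail_cons, Fin.isValue,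
      smul_eq_mul, map_add, _root_.map_mul, map_ofNat, map_neg, map_zero,
      Complex.conj_conj, zero_add, add_zero, mul_zero, zero_mul, neg_zero, mul_one, one_mul,
      neg_neg, mul_neg, neg_mul]
  try ring_nf
  try simp only [Complex.I_sq]
  try ring_nf

set_option maxHeartbeats 1000000 in
lemma zc_e31 (ζ a b c a1 b1 c1 a2 b2 c2 a3 b3 c3 ta tb tc : ℂ) :
    zcL ζ a b c a1 b1 c1 a2 b2 c2 a3 b3 c3 ta tb tc 3 1
      = zcR a b c a1 b1 c1 a3 b3 c3 ta tb tc 3 1 := by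
  simp only [zcL, zcR, Umat, Vmat, two_mul, pow_two, pow_three, Jmat_eq, Qmat,
      Matrix.mul_apply, Fin.sum_univ_four, Matrix.add_apply,
      Matrix.sub_apply, Matrix.neg_apply, Matrix.smul_apply, Matrix.zero_apply,
      Matrix.of_apply, Matrix.cons_val', Matrix.cons_val_zero, Matrix.cons_val_one,
      Matrix.head_cons, Matrix.empty_val', Matrix.cons_val_fin_one, Matrix.head_fin_const,
      Matrix.cons_val_two, Matrix.cons_val_three, Matrix.tail_cons, Fin.isValue,
      smul_eq_mul, map_add, _root_.map_mul, map_ofNat, map_neg, map_zero,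
      Complex.conj_conj, zero_add, add_zero, mul_zero, zero_mul, neg_zero, mul_one, one_mul,
      neg_neg, mul_neg, neg_mul]
  try ring_nf
  try simp only [Complex.I_sq]
  try ring_nf

set_option maxHeartbeats 1000000 in
lemma zc_e32 (ζ a b c a1 b1 c1 a2 b2 c2 a3 b3 c3 ta tb tc : ℂ) :
    zcL ζ a b c a1 b1 c1 a2 b2 c2 a3 b3 c3 ta tb tc 3 2
      = zcR a b c a1 b1 c1 a3 b3 c3 ta tb tc 3 2 := by
  simp only [zcL, zcR, Umat, Vmat, two_mul, pow_two, pow_three, Jmat_eq, Qmat,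
      Matrix.mul_apply, Fin.sum_univ_four, Matrix.add_apply,
      Matrix.sub_apply, Matrix.neg_apply, Matrix.smul_apply, Matrix.zero_apply,
      Matrix.of_apply, Matrix.cons_val', Matrix.cons_val_zero, Matrix.cons_val_one,
      Matrix.head_cons, Matrix.empty_val', Matrix.cons_val_fin_one, Matrix.head_fin_const,
      Matrix.cons_val_two, Matrix.cons_val_three, Matrix.tail_cons, Fin.isValue,
      smul_eq_mul, map_add, _root_.map_mul, map_ofNat, map_neg, map_zero,
      Complex.conj_conj, zero_add, add_zero, mul_zero, zero_mul, neg_zero, mul_one, one_mul,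
      neg_neg, mul_neg, neg_mul]
  try ring_nf
  try simp only [Complex.I_sq]
  try ring_nf

set_option maxHeartbeats 1000000 in
lemma zc_e33 (ζ a b c a1 b1 c1 a2 b2 c2 a3 b3 c3 ta tb tc : ℂ) :
    zcL ζ a b c a1 b1 c1 a2 b2 c2 a3 b3 c3 ta tb tc 3 3
      = zcR a b c a1 b1 c1 a3 b3 c3 ta tb tc 3 3 := by
  simp only [zcL, zcR, Umat, Vmat, two_mul, pow_two, pow_three, Jmat_eq, Qmat,
      Matrix.mul_apply, Fin.sum_univ_four, Matrix.add_apply,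
      Matrix.sub_apply, Matrix.neg_apply, Matrix.smul_apply, Matrix.zero_apply,
      Matrix.of_apply, Matrix.cons_val', Matrix.cons_val_zero, Matrix.cons_val_one,
      Matrix.head_cons, Matrix.empty_val', Matrix.cons_val_fin_one, Matrix.head_fin_const,
      Matrix.cons_val_two, Matrix.cons_val_three, Matrix.tail_cons, Fin.isValue,
      smul_eq_mul, map_add, _root_.map_mul, map_ofNat, map_neg, map_zero,
      Complex.conj_conj, zero_add, add_zero, mul_zero, zero_mul, neg_zero, mul_one, one_mul,
      neg_neg, mul_neg, neg_mul]
  try ring_nf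
  try simp only [Complex.I_sq]
  try ring_nf

set_option maxHeartbeats 1000000 in
lemma zc_algebra (ζ a b c a1 b1 c1 a2 b2 c2 a3 b3 c3 ta tb tc : ℂ) :
    zcL ζ a b c a1 b1 c1 a2 b2 c2 a3 b3 c3 ta tb tc
      = zcR a b c a1 b1 c1 a3 b3 c3 ta tb tc := by
  ext i j
  fin_cases i <;> fin_cases j <;>
    first
      | exact zc_e00 ζ a b c a1 b1 c1 a2 b2 c2 a3 b3 c3 ta tb tc
      | exact zc_e01 ζ a b c a1 b1 c1 a2 b2 c2 a3 b3 c3 ta tb tc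
      | exact zc_e02 ζ a b c a1 b1 c1 a2 b2 c2 a3 b3 c3 ta tb tc
      | exact zc_e03 ζ a b c a1 b1 c1 a2 b2 c2 a3 b3 c3 ta tb tc
      | exact zc_e10 ζ a b c a1 b1 c1 a2 b2 c2 a3 b3 c3 ta tb tc
      | exact zc_e11 ζ a b c a1 b1 c1 a2 b2 c2 a3 b3 c3 ta tb tc
      | exact zc_e12 ζ a b c a1 b1 c1 a2 b2 c2 a3 b3 c3 ta tb tc
      | exact zc_e13 ζ a b c a1 b1 c1 a2 b2 c2 a3 b3 c3 ta tb tc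
      | exact zc_e20 ζ a b c a1 b1 c1 a2 b2 c2 a3 b3 c3 ta tb tc
      | exact zc_e21 ζ a b c a1 b1 c1 a2 b2 c2 a3 b3 c3 ta tb tc
      | exact zc_e22 ζ a b c a1 b1 c1 a2 b2 c2 a3 b3 c3 ta tb tc
      | exact zc_e23 ζ a b c a1 b1 c1 a2 b2 c2 a3 b3 c3 ta tb tc
      | exact zc_e30 ζ a b c a1 b1 c1 a2 b2 c2 a3 b3 c3 ta tb tc
      | exact zc_e31 ζ a b c a1 b1 c1 a2 b2 c2 a3 b3 c3 ta tb tc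
      | exact zc_e32 ζ a b c a1 b1 c1 a2 b2 c2 a3 b3 c3 ta tb tc
      | exact zc_e33 ζ a b c a1 b1 c1 a2 b2 c2 a3 b3 c3 ta tb tc


set_option maxHeartbeats 1000000 in
lemma zc_master (u v w : ℝ × ℝ → ℂ)
    (hu : ContDiff ℝ (⊤ : ℕ∞) u) (hv : ContDiff ℝ (⊤ : ℕ∞) v)
    (hw : ContDiff ℝ (⊤ : ℕ∞) w) (ζ : ℂ) (p : ℝ × ℝ) :
    dTM (fun q => Ufield u v w ζ q) p - dXM (fun q => Vfield u v w ζ q) p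
      + Ufield u v w ζ p * Vfield u v w ζ p
      - Vfield u v w ζ p * Ufield u v w ζ p
    = Qmat (vcmLHS u v w u p) (vcmLHS u v w v p) (vcmLHS u v w w p) := by
  have hU : dTM (fun q => Ufield u v w ζ q) p
      = (0 : Matrix (Fin 4) (Fin 4) ℂ) + Qmat (dT u p) (dT v p) (dT w p) := by
    apply zc_dTM_eq
    exact (HMz.const ((-Complex.I * ζ) • Jmat) p.2).add
      (zc_HMQ (zc_hasDerivAt_dT hu p) (zc_hasDerivAt_dT hv p) (zc_hasDerivAt_dT hw p))
  have hQ : HMz (fun x => Qmat (u (x, p.2)) (v (x, p.2)) (w (x, p.2)))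
      (Qmat (dX u p) (dX v p) (dX w p)) p.1 :=
    zc_HMQ (zc_hasDerivAt_dX hu p) (zc_hasDerivAt_dX hv p) (zc_hasDerivAt_dX hw p)
  have hQ1 : HMz (fun x => Qmat (dX u (x, p.2)) (dX v (x, p.2)) (dX w (x, p.2)))
      (Qmat (dX (dX u) p) (dX (dX v) p) (dX (dX w) p)) p.1 :=
    zc_HMQ (zc_hasDerivAt_dX (zc_contDiff_dX hu) p) (zc_hasDerivAt_dX (zc_contDiff_dX hv) p)
      (zc_hasDerivAt_dX (zc_contDiff_dX hw) p)
  have hQ2 : HMz (fun x => Qmat (dX (dX u) (x, p.2)) (dX (dX v) (x, p.2)) (dX (dX w) (x, p.2)))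
      (Qmat (dX (dX (dX u)) p) (dX (dX (dX v)) p) (dX (dX (dX w)) p)) p.1 :=
    zc_HMQ (zc_hasDerivAt_dX (zc_contDiff_dX (zc_contDiff_dX hu)) p)
      (zc_hasDerivAt_dX (zc_contDiff_dX (zc_contDiff_dX hv)) p)
      (zc_hasDerivAt_dX (zc_contDiff_dX (zc_contDiff_dX hw)) p)
  have hVd : HMz (fun x => Vfield u v w ζ (x, p.2)) _ p.1 :=
    (((HMz.const ((-4 * Complex.I * ζ ^ 3) • Jmat) p.1).add (hQ.smul (4 * ζ ^ 2))).sub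
        (((hQ.sq.add hQ1).mul (HMz.const Jmat p.1)).smul (2 * Complex.I * ζ))).add
      ((((hQ2.neg).add (hQ.cube.two_mul')).add (hQ1.mul hQ)).sub (hQ.mul hQ1))
  have hV := zc_dXM_eq (F := fun q => Vfield u v w ζ q) hVd
  rw [hU, hV]
  exact zc_algebra ζ (u p) (v p) (w p) (dX u p) (dX v p) (dX w p)
    (dX (dX u) p) (dX (dX v) p) (dX (dX w) p)
    (dX (dX (dX u)) p) (dX (dX (dX v)) p) (dX (dX (dX w)) p)
    (dT u p) (dT v p) (dT w p)

lemma zc_Qmat_entries_zero {x y z : ℂ} (h : Qmat x y z = 0) : x = 0 ∧ y = 0 ∧ z = 0 := by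
  refine ⟨?_, ?_, ?_⟩
  · have := congrFun (congrFun h 0) 1
    simpa [Qmat] using this
  · have := congrFun (congrFun h 0) 2
    simpa [Qmat] using this
  · have := congrFun (congrFun h 0) 3
    simpa [Qmat] using this

/-- the zero-curvature equation
`∂_t U(ζ) - ∂_x V(ζ) + U(ζ)V(ζ) - V(ζ)U(ζ) = 0` holds for all `ζ`
iff `(u,v,w)` solves the vcmKdV equation. -/
theorem zero_curvature_iff_vcmKdV (u v w : ℝ × ℝ → ℂ)
    (hu : ContDiff ℝ (⊤ : ℕ∞) u) (hv : ContDiff ℝ (⊤ : ℕ∞) v)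
    (hw : ContDiff ℝ (⊤ : ℕ∞) w) :
    (∀ (ζ : ℂ) (p : ℝ × ℝ),
        dTM (fun q => Ufield u v w ζ q) p - dXM (fun q => Vfield u v w ζ q) p
          + Ufield u v w ζ p * Vfield u v w ζ p
          - Vfield u v w ζ p * Ufield u v w ζ p = 0)
      ↔ vcmKdVeq u v w := by
  constructor
  · intro h p
    have h0 := h 0 p
    rw [zc_master u v w hu hv hw 0 p] at h0
    exact zc_Qmat_entries_zero h0
  · intro h ζ p
    rw [zc_master u v w hu hv hw ζ p]
    obtain ⟨h1, h2, h3⟩ := h p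
    rw [h1, h2, h3]
    ext i j
    fin_cases i <;> fin_cases j <;>
      simp [Qmat, Matrix.vecHead, Matrix.vecTail]

end
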